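/- arXiv:2503.20393 — 3 statements merged into one kernel-verified Lean document; each statement's English description precedes it below -/
import Mathlib

section
/- Let X* be an independent copy of X. Then ∫_{ℝ^p×ℝ^p} ( Ψ(κ(x₁), κ(x₂)) − Ψ(κ(x₂), κ(x₁)) )² d(μ_X ⊗ μ_X)(x₁, x₂) ≤ 1 − P(X = X*), and equality holds if and only if Y is completely separated relative to X. -/
open MeasureTheory ProbabilityTheory Set Filter Topology

/-- The (nonparametric) relative effect `Ψ(μ, ν) = ∫ μ((-∞,y)) + (1/2) μ({y}) dν(y)`. -/
noncomputable def relEffect (μ ν : Measure ℝ) : ℝ :=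
  ∫ y, ((μ (Set.Iio y)).toReal + (1 / 2) * (μ {y}).toReal) ∂ν

/-- `α(μ) = 1 - ∫ μ({x}) dμ(x) = 1 - P(X = X*)`, the non-discrete mass of `μ`. -/
noncomputable def alphaCoeff {E : Type*} [MeasurableSpace E] (μ : Measure E) : ℝ :=
  1 - ∫ x, (μ {x}).toReal ∂μ

/-- A random variable is non-degenerate if it is not a.s. constant. -/
def Nondegenerate {Ω α : Type*} [MeasurableSpace Ω] (P : Measure Ω) (Z : Ω → α) : Prop :=
  ¬ ∃ c, ∀ᵐ ω ∂P, Z ω = c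

/-- `Y` is completely separated relative to `X`. -/
def CompletelySeparated {Ω E : Type*} [MeasurableSpace Ω] [MeasurableSpace E]
    (P : Measure Ω) [IsFiniteMeasure P] (Y : Ω → ℝ) (X : Ω → E) : Prop :=
  ∀ᵐ x : E × E ∂((P.map X).prod (P.map X)), x.1 ≠ x.2 →
    relEffect (condDistrib Y X P x.1) (condDistrib Y X P x.2) = 0 ∨
    relEffect (condDistrib Y X P x.1) (condDistrib Y X P x.2) = 1

section AuxLemmas

open scoped ENNReal

noncomputable def psiE (μ ν : Measure ℝ) : ℝ≥0∞ :=
  ∫⁻ y, (μ (Set.Iio y) + (1 / 2) * μ {y}) ∂ν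

lemma measurable_Iio_meas (μ : Measure ℝ) : Measurable fun y => μ (Set.Iio y) := by
  have : Monotone fun y => μ (Set.Iio y) := fun a b hab => measure_mono (Iio_subset_Iio hab)
  exact this.measurable

lemma measurable_singleton_meas (μ : Measure ℝ) [IsFiniteMeasure μ] : Measurable fun y => μ {y} := by
  have h1 : Monotone fun y => μ (Set.Iic y) := fun a b hab => measure_mono (Iic_subset_Iic.2 hab)
  have : ∀ y, μ {y} = μ (Set.Iic y) - μ (Set.Iio y) := by
    intro y
    rw [← Iio_union_right, measure_union (by simp) (measurableSet_singleton y)]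
    rw [ENNReal.add_sub_cancel_left (measure_ne_top μ _)]
  simp_rw [this]
  exact h1.measurable.sub (measurable_Iio_meas μ)

lemma psiE_le_one (μ ν : Measure ℝ) [IsProbabilityMeasure μ] [IsProbabilityMeasure ν] :
    psiE μ ν ≤ 1 := by
  have : ∀ y, μ (Set.Iio y) + (1 / 2) * μ {y} ≤ 1 := by
    intro y
    calc μ (Set.Iio y) + (1 / 2) * μ {y} ≤ μ (Set.Iio y) + μ {y} := by
          gcongr
          exact mul_le_of_le_one_left zero_le (by norm_num)
      _ = μ (Set.Iic y) := by
          rw [← Iio_union_right, measure_union (by simp) (measurableSet_singleton y)]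
      _ ≤ 1 := prob_le_one
  refine le_trans (lintegral_mono this) ?_
  simp

lemma relEffect_eq_toReal_psiE (μ ν : Measure ℝ) [IsProbabilityMeasure μ]
    [IsProbabilityMeasure ν] : relEffect μ ν = (psiE μ ν).toReal := by
  rw [psiE, ← integral_toReal]
  · refine integral_congr_ae (Eventually.of_forall fun y => ?_)
    simp only []
    rw [ENNReal.toReal_add (measure_ne_top μ _)
      (ENNReal.mul_ne_top (by norm_num) (measure_ne_top μ _)), ENNReal.toReal_mul]
    norm_num
  · exact ((measurable_Iio_meas μ).add
      ((measurable_singleton_meas μ).const_mul _)).aemeasurable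
  · refine Eventually.of_forall fun y => ?_
    have h1 : μ (Set.Iio y) + 1 / 2 * μ {y} ≤ 1 + 1 / 2 * 1 := by
      gcongr
      · exact prob_le_one
      · exact prob_le_one
    exact lt_of_le_of_lt h1 (by norm_num)

lemma lintegral_Iio_eq (μ ν : Measure ℝ) [IsProbabilityMeasure μ] [IsProbabilityMeasure ν] :
    ∫⁻ y, μ (Set.Iio y) ∂ν = (ν.prod μ) {p : ℝ × ℝ | p.2 < p.1} := by
  rw [Measure.prod_apply (measurableSet_lt measurable_snd measurable_fst)]
  rfl

lemma lintegral_sing_eq (μ ν : Measure ℝ) [IsProbabilityMeasure μ] [IsProbabilityMeasure ν] :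
    ∫⁻ y, μ {y} ∂ν = (ν.prod μ) {p : ℝ × ℝ | p.2 = p.1} := by
  rw [Measure.prod_apply (measurableSet_eq_fun measurable_snd measurable_fst)]
  rfl

lemma psiE_add_psiE (μ ν : Measure ℝ) [IsProbabilityMeasure μ] [IsProbabilityMeasure ν] :
    psiE μ ν + psiE ν μ = 1 := by
  have hm1 := measurable_Iio_meas μ
  have hm2 := measurable_singleton_meas μ
  have hm3 := measurable_Iio_meas ν
  have hm4 := measurable_singleton_meas ν
  have e1 : psiE μ ν = (ν.prod μ) {p : ℝ × ℝ | p.2 < p.1}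
      + (1/2) * (ν.prod μ) {p : ℝ × ℝ | p.2 = p.1} := by
    rw [psiE, lintegral_add_left hm1, lintegral_const_mul _ hm2,
      lintegral_Iio_eq, lintegral_sing_eq]
  have e2 : psiE ν μ = (ν.prod μ) {p : ℝ × ℝ | p.1 < p.2}
      + (1/2) * (ν.prod μ) {p : ℝ × ℝ | p.2 = p.1} := by
    rw [psiE, lintegral_add_left hm3, lintegral_const_mul _ hm4,
      lintegral_Iio_eq, lintegral_sing_eq]
    have hswap : (μ.prod ν) {p : ℝ × ℝ | p.2 < p.1} = (ν.prod μ) {p : ℝ × ℝ | p.1 < p.2} := by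
      rw [← Measure.prod_swap]
      rw [Measure.map_apply measurable_swap (measurableSet_lt measurable_snd measurable_fst)]
      rfl
    have hswap2 : (μ.prod ν) {p : ℝ × ℝ | p.2 = p.1} = (ν.prod μ) {p : ℝ × ℝ | p.2 = p.1} := by
      rw [← Measure.prod_swap]
      rw [Measure.map_apply measurable_swap (measurableSet_eq_fun measurable_snd measurable_fst)]
      congr 1
      ext p
      simp [Prod.swap, eq_comm]
    rw [hswap, hswap2]
  rw [e1, e2]
  have hd : (1:ℝ≥0∞)/2 * (ν.prod μ) {p : ℝ × ℝ | p.2 = p.1}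
      + 1/2 * (ν.prod μ) {p : ℝ × ℝ | p.2 = p.1} = (ν.prod μ) {p : ℝ × ℝ | p.2 = p.1} := by
    rw [← add_mul]
    norm_num
    rw [show ((2:ℝ≥0∞)⁻¹+2⁻¹)=1 from ENNReal.inv_two_add_inv_two, one_mul]
  have key : (ν.prod μ) {p : ℝ × ℝ | p.2 < p.1} + (ν.prod μ) {p : ℝ × ℝ | p.1 < p.2}
      + (ν.prod μ) {p : ℝ × ℝ | p.2 = p.1} = 1 := by
    rw [← measure_union, ← measure_union]
    · rw [show {p : ℝ × ℝ | p.2 < p.1} ∪ {p : ℝ × ℝ | p.1 < p.2} ∪ {p : ℝ × ℝ | p.2 = p.1}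
          = Set.univ by
        ext p
        simp only [Set.mem_union, Set.mem_setOf_eq, Set.mem_univ, iff_true]
        rcases lt_trichotomy p.2 p.1 with h|h|h
        · exact Or.inl (Or.inl h)
        · exact Or.inr h
        · exact Or.inl (Or.inr h)]
      simp
    · rw [Set.disjoint_left]
      rintro p hp hq
      simp only [Set.mem_union, Set.mem_setOf_eq] at hp hq
      rcases hp with h|h
      · exact absurd hq (ne_of_lt h)
      · exact absurd hq.symm (ne_of_lt h)
    · exact measurableSet_eq_fun measurable_snd measurable_fst
    · rw [Set.disjoint_left]
      intro p hp hq
      simp only [Set.mem_setOf_eq] at hp hq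
      exact absurd (hp.trans hq) (lt_irrefl _)
    · exact measurableSet_lt measurable_fst measurable_snd
  calc (ν.prod μ) {p : ℝ × ℝ | p.2 < p.1} + 1/2 * (ν.prod μ) {p : ℝ × ℝ | p.2 = p.1}
      + ((ν.prod μ) {p : ℝ × ℝ | p.1 < p.2} + 1/2 * (ν.prod μ) {p : ℝ × ℝ | p.2 = p.1})
      = (ν.prod μ) {p : ℝ × ℝ | p.2 < p.1} + (ν.prod μ) {p : ℝ × ℝ | p.1 < p.2}
        + (1/2 * (ν.prod μ) {p : ℝ × ℝ | p.2 = p.1}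
          + 1/2 * (ν.prod μ) {p : ℝ × ℝ | p.2 = p.1}) := by ring
    _ = 1 := by rw [hd, key]

lemma psiE_ne_top (μ ν : Measure ℝ) [IsProbabilityMeasure μ] [IsProbabilityMeasure ν] :
    psiE μ ν ≠ ⊤ := ne_top_of_le_ne_top (by simp) (psiE_le_one μ ν)

lemma relEffect_add_relEffect (μ ν : Measure ℝ) [IsProbabilityMeasure μ]
    [IsProbabilityMeasure ν] : relEffect μ ν + relEffect ν μ = 1 := by
  rw [relEffect_eq_toReal_psiE, relEffect_eq_toReal_psiE,
    ← ENNReal.toReal_add (psiE_ne_top μ ν) (psiE_ne_top ν μ), psiE_add_psiE]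
  simp

lemma relEffect_nonneg (μ ν : Measure ℝ) [IsProbabilityMeasure μ] [IsProbabilityMeasure ν] :
    0 ≤ relEffect μ ν := by
  rw [relEffect_eq_toReal_psiE]; exact ENNReal.toReal_nonneg

lemma relEffect_le_one (μ ν : Measure ℝ) [IsProbabilityMeasure μ] [IsProbabilityMeasure ν] :
    relEffect μ ν ≤ 1 := by
  rw [relEffect_eq_toReal_psiE]
  exact le_trans (ENNReal.toReal_mono (by simp) (psiE_le_one μ ν)) (by simp)

lemma relEffect_self (μ : Measure ℝ) [IsProbabilityMeasure μ] : relEffect μ μ = 1/2 := by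
  have := relEffect_add_relEffect μ μ
  linarith

lemma measurable_psiE_pair {E : Type*} [MeasurableSpace E] (κ : Kernel E ℝ) [IsMarkovKernel κ] :
    Measurable fun x : E × E => psiE (κ x.1) (κ x.2) := by
  have hb1 : Measurable fun b : E × ℝ => κ b.1 (Set.Iio b.2) := by
    have h := @Kernel.measurable_kernel_prodMk_left (E × ℝ) ℝ _ _
      (κ.comap Prod.fst measurable_fst) _ {q : (E × ℝ) × ℝ | q.2 < q.1.2}
      (measurableSet_lt measurable_snd measurable_fst.snd)
    simpa [Kernel.comap_apply, Set.Iio] using h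
  have hb2 : Measurable fun b : E × ℝ => κ b.1 {b.2} := by
    have h := @Kernel.measurable_kernel_prodMk_left (E × ℝ) ℝ _ _
      (κ.comap Prod.fst measurable_fst) _ {q : (E × ℝ) × ℝ | q.2 = q.1.2}
      (measurableSet_eq_fun measurable_snd measurable_fst.snd)
    simpa [Kernel.comap_apply, Set.singleton] using h
  have hG : Measurable (Function.uncurry fun (x : E × E) (y : ℝ) =>
      κ x.1 (Set.Iio y) + (1/2) * κ x.1 {y}) := by
    have hc : Measurable fun a : (E × E) × ℝ => (a.1.1, a.2) :=
      measurable_fst.fst.prodMk measurable_snd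
    exact ((hb1.comp hc).add ((hb2.comp hc).const_mul _))
  have key := @Measurable.lintegral_kernel_prod_right (E × E) ℝ _ _
    (κ.comap Prod.snd measurable_snd) _ _ hG
  simpa [Kernel.comap_apply, psiE] using key
lemma measurable_relEffect_pair {E : Type*} [MeasurableSpace E] (κ : Kernel E ℝ)
    [IsMarkovKernel κ] :
    Measurable fun x : E × E => relEffect (κ x.1) (κ x.2) := by
  have : (fun x : E × E => relEffect (κ x.1) (κ x.2))
      = fun x => (psiE (κ x.1) (κ x.2)).toReal := by
    ext x
    exact relEffect_eq_toReal_psiE _ _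
  rw [this]
  exact (measurable_psiE_pair κ).ennreal_toReal

end AuxLemmas

/-- Lemma: the squared antisymmetrized relative effect integral is at most `1 - P(X = X*)`,
with equality iff `Y` is completely separated relative to `X`. -/
theorem integral_sq_relEffect_le_alpha_iff_completelySeparated
    {Ω : Type*} [MeasurableSpace Ω] {p : ℕ} (hp : 1 ≤ p)
    (P : Measure Ω) [IsProbabilityMeasure P]
    (X : Ω → (Fin p → ℝ)) (Y : Ω → ℝ)
    (hX : Measurable X) (hY : Measurable Y)
    (hXnd : ∃ k, Nondegenerate P fun ω => X ω k)
    (hYnd : Nondegenerate P Y) :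
    (∫ x : (Fin p → ℝ) × (Fin p → ℝ),
        (relEffect (condDistrib Y X P x.1) (condDistrib Y X P x.2)
          - relEffect (condDistrib Y X P x.2) (condDistrib Y X P x.1)) ^ 2
        ∂((P.map X).prod (P.map X))) ≤ alphaCoeff (P.map X)
    ∧ ((∫ x : (Fin p → ℝ) × (Fin p → ℝ),
        (relEffect (condDistrib Y X P x.1) (condDistrib Y X P x.2)
          - relEffect (condDistrib Y X P x.2) (condDistrib Y X P x.1)) ^ 2
        ∂((P.map X).prod (P.map X))) = alphaCoeff (P.map X)
      ↔ CompletelySeparated P Y X) := by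
  classical
  set μ : Measure (Fin p → ℝ) := P.map X with hμdef
  haveI : IsProbabilityMeasure μ := Measure.isProbabilityMeasure_map hX.aemeasurable
  set κ : Kernel (Fin p → ℝ) ℝ := condDistrib Y X P with hκdef
  set ρ : Measure ((Fin p → ℝ) × (Fin p → ℝ)) := μ.prod μ with hρdef
  set F : (Fin p → ℝ) × (Fin p → ℝ) → ℝ := fun x => relEffect (κ x.1) (κ x.2) with hFdef
  set f : (Fin p → ℝ) × (Fin p → ℝ) → ℝ := fun x => (relEffect (κ x.1) (κ x.2) - relEffect (κ x.2) (κ x.1)) ^ 2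
    with hfdef
  have hsum : ∀ x : (Fin p → ℝ) × (Fin p → ℝ), relEffect (κ x.2) (κ x.1) = 1 - F x := fun x => by
    have := relEffect_add_relEffect (κ x.1) (κ x.2)
    simp only [hFdef]; linarith
  have hF0 : ∀ x, 0 ≤ F x := fun x => relEffect_nonneg _ _
  have hF1 : ∀ x, F x ≤ 1 := fun x => relEffect_le_one _ _
  have hD : MeasurableSet {x : (Fin p → ℝ) × (Fin p → ℝ) | x.1 = x.2} :=
    measurableSet_eq_fun measurable_fst measurable_snd
  set S : Set ((Fin p → ℝ) × (Fin p → ℝ)) := {x : (Fin p → ℝ) × (Fin p → ℝ) | x.1 = x.2}ᶜ with hSdef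
  have hS : MeasurableSet S := hD.compl
  set ind : (Fin p → ℝ) × (Fin p → ℝ) → ℝ := S.indicator fun _ => (1:ℝ) with hinddef
  -- pointwise bound
  have hfeq : ∀ x, f x = (2 * F x - 1) ^ 2 := fun x => by
    simp only [hfdef, hsum x, hFdef]; ring
  have hle : ∀ x, f x ≤ ind x := by
    intro x
    by_cases hx : x ∈ S
    · have : ind x = 1 := by simp [hinddef, hx]
      rw [this, hfeq x]
      nlinarith [hF0 x, hF1 x]
    · have hxx : x.1 = x.2 := not_not.mp hx
      have : ind x = 0 := by simp [hinddef, hx]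
      rw [this, hfdef]
      simp [hxx]
  have hf0 : ∀ x, 0 ≤ f x := fun x => sq_nonneg _
  have hFmeas : Measurable F := measurable_relEffect_pair κ
  have hfmeas : Measurable f := by
    have : f = fun x => (2 * F x - 1) ^ 2 := funext hfeq
    rw [this]
    exact (((hFmeas.const_mul 2).sub measurable_const).pow measurable_const)
  have hind_le_one : ∀ x, ind x ≤ 1 := by
    intro x
    by_cases hx : x ∈ S <;> simp [hinddef, hx]
  have h_int_f : Integrable f ρ := by
    refine (integrable_const (1:ℝ)).mono' hfmeas.aestronglyMeasurable ?_
    exact ae_of_all _ fun x => by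
      rw [Real.norm_eq_abs, abs_of_nonneg (hf0 x)]
      exact (hle x).trans (hind_le_one x)
  have h_int_ind : Integrable ind ρ := (integrable_const (1:ℝ)).indicator hS
  have h_int_eval : ∫ x, ind x ∂ρ = (ρ S).toReal := by
    rw [hinddef, integral_indicator_const (1:ℝ) hS]
    simp
    rfl
  -- alphaCoeff computation
  have hsm : Measurable fun x : (Fin p → ℝ) => μ {x} := by
    have h := measurable_measure_prodMk_left (ν := μ) hD
    have : ∀ x : (Fin p → ℝ), (Prod.mk x ⁻¹' {q : (Fin p → ℝ) × (Fin p → ℝ) | q.1 = q.2}) = {x} := by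
      intro x; ext y; simp [eq_comm]
    simpa [this] using h
  have hρdiag : ρ {x : (Fin p → ℝ) × (Fin p → ℝ) | x.1 = x.2} = ∫⁻ x, μ {x} ∂μ := by
    rw [hρdef, Measure.prod_apply hD]
    congr 1
    ext x
    congr 1
    ext y
    simp [eq_comm]
  have halpha : alphaCoeff μ = (ρ S).toReal := by
    rw [alphaCoeff, integral_toReal hsm.aemeasurable
      (ae_of_all _ fun x => measure_lt_top μ _), ← hρdiag]
    rw [hSdef, measure_compl hD (measure_ne_top _ _)]
    have h1 : ρ Set.univ = 1 := measure_univ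
    rw [h1, ENNReal.toReal_sub_of_le prob_le_one ENNReal.one_ne_top, ENNReal.toReal_one]
  have hineq : ∫ x, f x ∂ρ ≤ alphaCoeff μ := by
    rw [halpha, ← h_int_eval]
    exact integral_mono h_int_f h_int_ind hle
  refine ⟨hineq, ?_⟩
  -- equality iff
  have hiff1 : ∫ x, f x ∂ρ = alphaCoeff μ ↔ f =ᵐ[ρ] ind := by
    rw [halpha, ← h_int_eval]
    constructor
    · intro h
      have hg0 : (∫ x, (ind x - f x) ∂ρ) = 0 := by
        rw [integral_sub h_int_ind h_int_f, h, sub_self]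
      have := (integral_eq_zero_iff_of_nonneg (fun x => sub_nonneg.mpr (hle x))
        (h_int_ind.sub h_int_f)).mp hg0
      filter_upwards [this] with x hx
      have : ind x - f x = 0 := hx
      linarith
    · intro h
      exact integral_congr_ae h
  have hiff2 : (f =ᵐ[ρ] ind) ↔ CompletelySeparated P Y X := by
    constructor
    · intro h
      filter_upwards [h] with x hx hne
      have hxS : x ∈ S := hne
      have hindx : ind x = 1 := by simp [hinddef, hxS]
      rw [hindx, hfeq x] at hx
      have hz : F x * (F x - 1) = 0 := by nlinarith
      rcases mul_eq_zero.mp hz with h0 | h1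
      · exact Or.inl h0
      · exact Or.inr (by linarith [sub_eq_zero.mp h1])
    · intro h
      filter_upwards [h] with x hx
      by_cases hxx : x.1 = x.2
      · have h1 : f x = 0 := by rw [hfdef]; simp [hxx]
        have h2 : ind x = 0 := by simp [hinddef, hSdef, hxx]
        rw [h1, h2]
      · have hxS : x ∈ S := hxx
        have h2 : ind x = 1 := by simp [hinddef, hxS]
        rcases hx hxx with h0 | h1
        · rw [hfeq x, h2]
          have : F x = 0 := h0
          rw [this]; norm_num
        · rw [hfeq x, h2]
          have : F x = 1 := h1
          rw [this]; norm_num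
  rw [hiff1, hiff2]
end

section
/- Suppose some coordinate X_k of X has continuous cdf (equivalently, the law of X_k is atomless). If Y is completely separated relative to X, then Y perfectly depends on X, i.e. there exists a Borel measurable function f : ℝ^p → ℝ with Y = f(X) almost surely, and moreover the cdf of Y is continuous (the law of Y is atomless). -/
open MeasureTheory ProbabilityTheory Set Filter Topology

namespace RelEffectAux

/-- The "mid-cdf" integrand of the relative effect. -/
noncomputable def midcdf (ρ : Measure ℝ) (t : ℝ) : ℝ :=
  (ρ (Set.Iio t)).toReal + (1 / 2) * (ρ {t}).toReal

lemma relEffect_eq (μ ν : Measure ℝ) : relEffect μ ν = ∫ y, midcdf μ y ∂ν := rfl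

lemma midcdf_nonneg (ρ : Measure ℝ) (t : ℝ) : 0 ≤ midcdf ρ t := by
  unfold midcdf; positivity

lemma toReal_add_singleton (ρ : Measure ℝ) [IsFiniteMeasure ρ] (t : ℝ) :
    (ρ (Set.Iio t)).toReal + (ρ {t}).toReal = (ρ (Set.Iic t)).toReal := by
  rw [← ENNReal.toReal_add (measure_ne_top ρ _) (measure_ne_top ρ _),
    ← measure_union (by simp) (measurableSet_singleton t), Set.Iio_union_right]

lemma midcdf_le_one (ρ : Measure ℝ) [IsProbabilityMeasure ρ] (t : ℝ) : midcdf ρ t ≤ 1 := by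
  have h2 : (ρ (Set.Iic t)).toReal ≤ 1 :=
    ENNReal.toReal_le_of_le_ofReal one_pos.le (by simpa using prob_le_one)
  have h3 := toReal_add_singleton ρ t
  have h4 : (0:ℝ) ≤ (ρ {t}).toReal := ENNReal.toReal_nonneg
  unfold midcdf
  nlinarith

lemma measurable_midcdf (ρ : Measure ℝ) [IsFiniteMeasure ρ] : Measurable (midcdf ρ) := by
  have hIio : Measurable fun t => ρ (Set.Iio t) :=
    Monotone.measurable (fun a b hab => measure_mono (Set.Iio_subset_Iio hab))
  have hIic : Measurable fun t => ρ (Set.Iic t) :=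
    Monotone.measurable (fun a b hab => measure_mono (Set.Iic_subset_Iic.mpr hab))
  have hs : (fun t => ρ {t}) = fun t => ρ (Set.Iic t) - ρ (Set.Iio t) := by
    funext t
    rw [← Set.Iio_union_right, measure_union (by simp) (measurableSet_singleton t)]
    rw [ENNReal.add_sub_cancel_left (measure_ne_top ρ _)]
  exact (hIio.ennreal_toReal).add
    ((measurable_const.mul ((by rw [hs]; exact hIic.sub hIio : Measurable fun t => ρ {t}).ennreal_toReal)))

lemma integrable_midcdf (ρ σ : Measure ℝ) [IsProbabilityMeasure ρ] [IsFiniteMeasure σ] :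
    Integrable (midcdf ρ) σ := by
  refine Integrable.mono' (integrable_const 1) (measurable_midcdf ρ).aestronglyMeasurable ?_
  filter_upwards with t
  rw [Real.norm_eq_abs, abs_of_nonneg (midcdf_nonneg ρ t)]
  exact midcdf_le_one ρ t

lemma ae_of_relEffect_eq_zero {ρ σ : Measure ℝ} [IsProbabilityMeasure ρ] [IsProbabilityMeasure σ]
    (h : relEffect ρ σ = 0) : ∀ᵐ t ∂σ, ρ (Set.Iio t) = 0 ∧ ρ {t} = 0 := by
  rw [relEffect_eq] at h
  have h0 : midcdf ρ =ᵐ[σ] 0 :=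
    (integral_eq_zero_iff_of_nonneg (midcdf_nonneg ρ) (integrable_midcdf ρ σ)).mp h
  filter_upwards [h0] with t ht
  have h1 : (0:ℝ) ≤ (ρ (Set.Iio t)).toReal := ENNReal.toReal_nonneg
  have h2 : (0:ℝ) ≤ (ρ {t}).toReal := ENNReal.toReal_nonneg
  have ht' : (ρ (Set.Iio t)).toReal + (1 / 2) * (ρ {t}).toReal = 0 := ht
  constructor
  · have : (ρ (Set.Iio t)).toReal = 0 := by nlinarith
    exact (ENNReal.toReal_eq_zero_iff _).mp this |>.resolve_right (measure_ne_top ρ _)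
  · have : (ρ {t}).toReal = 0 := by nlinarith
    exact (ENNReal.toReal_eq_zero_iff _).mp this |>.resolve_right (measure_ne_top ρ _)

lemma ae_of_relEffect_eq_one {ρ σ : Measure ℝ} [IsProbabilityMeasure ρ] [IsProbabilityMeasure σ]
    (h : relEffect ρ σ = 1) : ∀ᵐ t ∂σ, ρ (Set.Ici t) = 0 := by
  rw [relEffect_eq] at h
  have hint := integrable_midcdf ρ σ
  have hz : ∫ t, (1 - midcdf ρ t) ∂σ = 0 := by
    rw [integral_sub (integrable_const 1) hint, h]
    simp
  have h0 : (fun t => 1 - midcdf ρ t) =ᵐ[σ] 0 := by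
    refine (integral_eq_zero_iff_of_nonneg (fun t => ?_) ((integrable_const 1).sub hint)).mp hz
    simpa using midcdf_le_one ρ t
  filter_upwards [h0] with t ht
  have ht' : midcdf ρ t = 1 := by
    have : (1:ℝ) - midcdf ρ t = 0 := ht
    linarith
  have h3 := toReal_add_singleton ρ t
  have h2 : (ρ (Set.Iic t)).toReal ≤ 1 :=
    ENNReal.toReal_le_of_le_ofReal one_pos.le (by simpa using prob_le_one)
  have h4 : (0:ℝ) ≤ (ρ {t}).toReal := ENNReal.toReal_nonneg
  have ht'' : (ρ (Set.Iio t)).toReal + (1 / 2) * (ρ {t}).toReal = 1 := ht'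
  have hb : (ρ {t}).toReal = 0 := by nlinarith
  have ha : (ρ (Set.Iio t)).toReal = 1 := by nlinarith
  have hIio : ρ (Set.Iio t) = 1 := (ENNReal.toReal_eq_one_iff _).mp ha
  have := measure_compl (measurableSet_Iio (a := t)) (measure_ne_top ρ _)
  rw [Set.compl_Iio] at this
  rw [this, hIio, measure_univ, tsub_self]

lemma of_ae_of_atom {σ : Measure ℝ} {Q : ℝ → Prop} (h : ∀ᵐ t ∂σ, Q t) {y : ℝ}
    (hy : σ {y} ≠ 0) : Q y := by
  by_contra hQ
  refine hy (measure_mono_null ?_ (ae_iff.mp h))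
  intro t ht
  rw [Set.mem_singleton_iff] at ht
  subst ht
  exact hQ

lemma exists_of_ae_of_pos {σ : Measure ℝ} {Q : ℝ → Prop} (h : ∀ᵐ t ∂σ, Q t) {s : Set ℝ}
    (hs : σ s ≠ 0) : ∃ t ∈ s, Q t := by
  by_contra hcon
  push_neg at hcon
  exact hs (measure_mono_null (fun t ht => hcon t ht) (ae_iff.mp h))

end RelEffectAux

open RelEffectAux

/-- If some coordinate of `X` has continuous cdf (atomless law) and `Y` is completely
separated relative to `X`, then `Y` perfectly depends on `X` and has atomless law. -/
theorem completelySeparated_imp_perfectDependence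
    {Ω : Type*} [MeasurableSpace Ω] {p : ℕ} (hp : 1 ≤ p)
    (P : Measure Ω) [IsProbabilityMeasure P]
    (X : Ω → (Fin p → ℝ)) (Y : Ω → ℝ)
    (hX : Measurable X) (hY : Measurable Y)
    (hYnd : Nondegenerate P Y)
    (k : Fin p) (hk : NoAtoms (P.map fun ω => X ω k))
    (hsep : CompletelySeparated P Y X) :
    (∃ f : (Fin p → ℝ) → ℝ, Measurable f ∧ ∀ᵐ ω ∂P, Y ω = f (X ω))
    ∧ NoAtoms (P.map Y) := by
  classical
  set μ : Measure (Fin p → ℝ) := P.map X with hμ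
  set κ : Kernel (Fin p → ℝ) ℝ := condDistrib Y X P with hκ
  haveI hμprob : IsProbabilityMeasure μ := Measure.isProbabilityMeasure_map hX.aemeasurable
  -- The coordinate-diagonal is null for μ ⊗ μ.
  have hDk : (μ.prod μ) {x : (Fin p → ℝ) × (Fin p → ℝ) | x.1 k = x.2 k} = 0 := by
    have hm : MeasurableSet {x : (Fin p → ℝ) × (Fin p → ℝ) | x.1 k = x.2 k} :=
      measurableSet_eq_fun (by fun_prop) (by fun_prop)
    rw [Measure.prod_apply hm]
    have hz : ∀ x₁ : Fin p → ℝ, μ {a : Fin p → ℝ | x₁ k = a k} = 0 := by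
      intro x₁
      have hpre : {a : Fin p → ℝ | x₁ k = a k}
          = (fun x : Fin p → ℝ => x k) ⁻¹' {x₁ k} := by
        ext x₂; simp [eq_comm]
      rw [hpre, ← Measure.map_apply (measurable_pi_apply k) (measurableSet_singleton _), hμ,
        Measure.map_map (measurable_pi_apply k) hX]
      have hcomp : ((fun x : Fin p → ℝ => x k) ∘ X) = fun ω => X ω k := rfl
      rw [hcomp]
      haveI : NullSingletonClass (Measure.map (fun ω => X ω k) P) := hk
      exact measure_singleton _
    simp only [Set.preimage_setOf_eq]
    simp [hz]
  -- Key extraction: sets on which all pairs of kernels are "incomparable" are null.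
  have key : ∀ A : Set (Fin p → ℝ), MeasurableSet A →
      (∀ x₁ ∈ A, ∀ x₂ ∈ A,
        relEffect (κ x₁) (κ x₂) ≠ 0 ∧ relEffect (κ x₁) (κ x₂) ≠ 1) →
      μ A = 0 := by
    intro A hA hcon
    by_contra hpos
    have hsep' : ∀ᵐ x : (Fin p → ℝ) × (Fin p → ℝ) ∂(μ.prod μ), x.1 ≠ x.2 →
        relEffect (κ x.1) (κ x.2) = 0 ∨ relEffect (κ x.1) (κ x.2) = 1 := hsep
    have hN := ae_iff.mp hsep'
    have hsub : A ×ˢ A ⊆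
        {x : (Fin p → ℝ) × (Fin p → ℝ) | ¬ (x.1 ≠ x.2 →
          relEffect (κ x.1) (κ x.2) = 0 ∨ relEffect (κ x.1) (κ x.2) = 1)}
        ∪ {x : (Fin p → ℝ) × (Fin p → ℝ) | x.1 k = x.2 k} := by
      rintro ⟨x₁, x₂⟩ hx
      rw [Set.mem_prod] at hx
      by_contra hmem
      rw [Set.mem_union, not_or] at hmem
      obtain ⟨h1, h2⟩ := hmem
      rw [Set.mem_setOf_eq, not_not] at h1
      rw [Set.mem_setOf_eq] at h2
      have hne : x₁ ≠ x₂ := fun h => h2 (by rw [h])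
      rcases h1 hne with h | h
      · exact (hcon x₁ hx.1 x₂ hx.2).1 h
      · exact (hcon x₁ hx.1 x₂ hx.2).2 h
    have hle : (μ.prod μ) (A ×ˢ A) = 0 :=
      measure_mono_null hsub (measure_union_null hN hDk)
    rw [Measure.prod_prod] at hle
    exact hpos (by simpa [mul_eq_zero, or_self] using hle)
  -- Kernels are probability measures.
  haveI : IsMarkovKernel κ := by rw [hκ]; infer_instance
  -- For every y, the set of x whose kernel has an atom at y is null.
  have hatom : ∀ y : ℝ, μ {x | κ x {y} ≠ 0} = 0 := by
    intro y
    refine key _ ?_ ?_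
    · exact (Kernel.measurable_coe κ (measurableSet_singleton y)) (measurableSet_singleton 0)
        |>.compl
    · intro x₁ h₁ x₂ h₂
      constructor
      · intro h0
        have hae := ae_of_relEffect_eq_zero h0
        exact h₁ (of_ae_of_atom hae h₂).2
      · intro h1
        have hae := ae_of_relEffect_eq_one h1
        have := of_ae_of_atom hae h₂
        exact h₁ (measure_mono_null (by simp) this)
  -- For every rational q, the set of x whose kernel straddles q is null.
  have hstraddle : ∀ q : ℚ,
      μ {x | κ x (Set.Iic (q:ℝ)) ≠ 0 ∧ κ x (Set.Ioi (q:ℝ)) ≠ 0} = 0 := by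
    intro q
    refine key _ ?_ ?_
    · exact ((Kernel.measurable_coe κ measurableSet_Iic (measurableSet_singleton 0)).compl).inter
        ((Kernel.measurable_coe κ measurableSet_Ioi (measurableSet_singleton 0)).compl)
    · rintro x₁ ⟨h₁l, h₁r⟩ x₂ ⟨h₂l, h₂r⟩
      constructor
      · intro h0
        have hae := ae_of_relEffect_eq_zero h0
        obtain ⟨t, ht, hQ⟩ := exists_of_ae_of_pos hae h₂r
        refine h₁l (measure_mono_null ?_ hQ.1)
        exact fun s hs => Set.mem_Iio.mpr (lt_of_le_of_lt (Set.mem_Iic.mp hs) (Set.mem_Ioi.mp ht))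
      · intro h1
        have hae := ae_of_relEffect_eq_one h1
        obtain ⟨t, ht, hQ⟩ := exists_of_ae_of_pos hae h₂l
        refine h₁r (measure_mono_null ?_ hQ)
        exact fun s hs => Set.mem_Ici.mpr (le_trans (Set.mem_Iic.mp ht) (le_of_lt (Set.mem_Ioi.mp hs)))
  -- The basic identity: P.map (X, Y) = μ ⊗ₘ κ.
  have hmapXY : μ ⊗ₘ κ = P.map (fun ω => (X ω, Y ω)) := by
    rw [hκ, condDistrib_def, hμ, ← Measure.fst_map_prodMk (X := X) hY]
    exact Measure.disintegrate _ _
  have hYlaw : ∀ s : Set ℝ, MeasurableSet s → (P.map Y) s = ∫⁻ x, κ x s ∂μ := by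
    intro s hs
    have h1 : P.map Y = (P.map fun ω => (X ω, Y ω)).map Prod.snd := by
      rw [Measure.map_map measurable_snd (hX.prodMk hY)]
      rfl
    rw [h1, Measure.map_apply measurable_snd hs, ← hmapXY,
      Measure.compProd_apply (measurable_snd hs)]
    rfl
  -- NoAtoms for the law of Y.
  have hna : NoAtoms (P.map Y) := by
    constructor
    intro y
    rw [hYlaw {y} (measurableSet_singleton y)]
    have hz : ∀ᵐ x ∂μ, κ x {y} = 0 := by
      rw [ae_iff]
      exact hatom y
    rw [lintegral_congr_ae hz, lintegral_zero]
  -- a.e. x, the kernel is a Dirac measure.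
  have hae_dirac : ∀ᵐ x ∂μ, ∃ c : ℝ, κ x {c} = 1 := by
    have hall : ∀ᵐ x ∂μ, ∀ q : ℚ, κ x (Set.Iic (q:ℝ)) = 0 ∨ κ x (Set.Ioi (q:ℝ)) = 0 := by
      rw [ae_all_iff]
      intro q
      rw [ae_iff]
      have : {x | ¬(κ x (Set.Iic (q:ℝ)) = 0 ∨ κ x (Set.Ioi (q:ℝ)) = 0)}
          = {x | κ x (Set.Iic (q:ℝ)) ≠ 0 ∧ κ x (Set.Ioi (q:ℝ)) ≠ 0} := by
        ext x; simp [not_or]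
      rw [this]
      exact hstraddle q
    filter_upwards [hall] with x hx
    set ρ : Measure ℝ := κ x with hρ
    haveI : IsProbabilityMeasure ρ := by rw [hρ]; infer_instance
    -- the set of rationals above the support
    have hGne : ∃ q : ℚ, ρ (Set.Ioi (q:ℝ)) = 0 := by
      by_contra hcon
      push_neg at hcon
      have hIic : ∀ q : ℚ, ρ (Set.Iic (q:ℝ)) = 0 := fun q => (hx q).resolve_right (hcon q)
      have : ρ Set.univ = 0 := by
        rw [← Real.iUnion_Iic_rat]
        exact measure_iUnion_null hIic
      simp [measure_univ] at this
    have hLne : ∃ q : ℚ, ρ (Set.Iic (q:ℝ)) = 0 := by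
      by_contra hcon
      push_neg at hcon
      have hIoi : ∀ q : ℚ, ρ (Set.Ioi (q:ℝ)) = 0 := fun q => (hx q).resolve_left (hcon q)
      have huniv : (⋃ q : ℚ, Set.Ioi (q:ℝ)) = Set.univ := by
        ext t
        simp only [Set.mem_iUnion, Set.mem_Ioi, Set.mem_univ, iff_true]
        obtain ⟨q, hq⟩ := exists_rat_lt t
        exact ⟨q, hq⟩
      have : ρ Set.univ = 0 := by
        rw [← huniv]
        exact measure_iUnion_null hIoi
      simp [measure_univ] at this
    obtain ⟨q₀, hq₀⟩ := hLne
    set S : Set ℝ := (fun q : ℚ => (q:ℝ)) '' {q : ℚ | ρ (Set.Ioi (q:ℝ)) = 0} with hS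
    have hSne : S.Nonempty := by
      obtain ⟨q, hq⟩ := hGne
      exact ⟨(q:ℝ), ⟨q, hq, rfl⟩⟩
    have hSbdd : BddBelow S := by
      refine ⟨(q₀:ℝ), ?_⟩
      rintro r ⟨q, hq, rfl⟩
      by_contra hlt
      push_neg at hlt
      have hcover : Set.univ ⊆ Set.Iic (q₀:ℝ) ∪ Set.Ioi (q:ℝ) := by
        intro t _
        rcases le_or_gt t (q₀:ℝ) with h | h
        · exact Or.inl h
        · exact Or.inr (lt_trans hlt h)
      have : ρ Set.univ = 0 :=
        measure_mono_null hcover (measure_union_null hq₀ hq)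
      simp [measure_univ] at this
    set c : ℝ := sInf S with hc
    refine ⟨c, ?_⟩
    have hIio : ρ (Set.Iio c) = 0 := by
      have hsub : Set.Iio c ⊆ ⋃ n : ℕ, Set.Iic (c - 1/(n+1)) := by
        intro t ht
        obtain ⟨n, hn⟩ := exists_nat_one_div_lt (K := ℝ) (sub_pos.mpr ht)
        exact Set.mem_iUnion.mpr ⟨n, by simp only [Set.mem_Iic]; linarith⟩
      refine measure_mono_null hsub (measure_iUnion_null fun n => ?_)
      have hlt : c - 1/((n:ℝ)+1) < c := by
        have : (0:ℝ) < 1/((n:ℝ)+1) := by positivity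
        linarith
      obtain ⟨q, hq1, hq2⟩ := exists_rat_btwn hlt
      have hqnot : ρ (Set.Ioi (q:ℝ)) ≠ 0 := by
        intro hq0
        have : (q:ℝ) ∈ S := ⟨q, hq0, rfl⟩
        exact absurd (csInf_le hSbdd this) (not_le.mpr hq2)
      have hqIic : ρ (Set.Iic (q:ℝ)) = 0 := (hx q).resolve_right hqnot
      exact measure_mono_null (Set.Iic_subset_Iic.mpr hq1.le) hqIic
    have hIoi : ρ (Set.Ioi c) = 0 := by
      have hsub : Set.Ioi c ⊆ ⋃ n : ℕ, Set.Ioi (c + 1/(n+1)) := by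
        intro t ht
        obtain ⟨n, hn⟩ := exists_nat_one_div_lt (K := ℝ) (sub_pos.mpr ht)
        exact Set.mem_iUnion.mpr ⟨n, by simp only [Set.mem_Ioi]; linarith⟩
      refine measure_mono_null hsub (measure_iUnion_null fun n => ?_)
      have hlt : c < c + 1/((n:ℝ)+1) := by
        have : (0:ℝ) < 1/((n:ℝ)+1) := by positivity
        linarith
      obtain ⟨r, hrS, hr⟩ := exists_lt_of_csInf_lt hSne (hc ▸ hlt)
      obtain ⟨q, hq0, rfl⟩ := hrS
      exact measure_mono_null (fun s hs => lt_trans hr hs) hq0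
    have hcover : ρ Set.univ ≤ ρ (Set.Iio c) + ρ {c} + ρ (Set.Ioi c) := by
      have : Set.univ ⊆ Set.Iio c ∪ {c} ∪ Set.Ioi c := by
        intro t _
        rcases lt_trichotomy t c with h | h | h
        · exact Or.inl (Or.inl h)
        · exact Or.inl (Or.inr h)
        · exact Or.inr h
      calc ρ Set.univ ≤ ρ (Set.Iio c ∪ {c} ∪ Set.Ioi c) := measure_mono this
        _ ≤ ρ (Set.Iio c ∪ {c}) + ρ (Set.Ioi c) := measure_union_le _ _
        _ ≤ ρ (Set.Iio c) + ρ {c} + ρ (Set.Ioi c) :=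
            add_le_add (measure_union_le _ _) le_rfl
    rw [hIio, hIoi, measure_univ, zero_add, add_zero] at hcover
    exact le_antisymm prob_le_one hcover
  -- The median-type function f.
  set f : (Fin p → ℝ) → ℝ := fun x => sInf {t : ℝ | (1/2 : ENNReal) ≤ κ x (Set.Iic t)} with hf_def
  -- basic properties of the sets S x
  have hSne : ∀ x, {t : ℝ | (1/2 : ENNReal) ≤ κ x (Set.Iic t)}.Nonempty := by
    intro x
    by_contra hcon
    rw [Set.not_nonempty_iff_eq_empty] at hcon
    have hall : ∀ t : ℝ, κ x (Set.Iic t) < 1/2 := by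
      intro t
      by_contra h
      push_neg at h
      have hmem : t ∈ {t : ℝ | (1/2 : ENNReal) ≤ κ x (Set.Iic t)} := h
      rw [hcon] at hmem
      exact Set.notMem_empty t hmem
    have hmono : Monotone fun n : ℕ => Set.Iic ((n:ℝ)) :=
      fun a b hab => Set.Iic_subset_Iic.mpr (by exact_mod_cast hab)
    have huniv : (⋃ n : ℕ, Set.Iic ((n:ℝ))) = Set.univ := by
      ext t
      simp only [Set.mem_iUnion, Set.mem_Iic, Set.mem_univ, iff_true]
      obtain ⟨n, hn⟩ := exists_nat_ge t
      exact ⟨n, hn⟩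
    have := hmono.directed_le.measure_iUnion (μ := κ x)
    rw [huniv, measure_univ] at this
    have hle : (⨆ n : ℕ, κ x (Set.Iic ((n:ℝ)))) ≤ 1/2 :=
      iSup_le fun n => (hall n).le
    rw [← this] at hle
    have : (1:ENNReal) ≤ 1/2 := by simpa using hle
    norm_num at this
  have hSbdd : ∀ x, BddBelow {t : ℝ | (1/2 : ENNReal) ≤ κ x (Set.Iic t)} := by
    intro x
    have hanti : Antitone fun n : ℕ => Set.Iic (-(n:ℝ)) := by
      intro a b hab
      exact Set.Iic_subset_Iic.mpr (by exact_mod_cast neg_le_neg (by exact_mod_cast hab))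
    have hinter : (⋂ n : ℕ, Set.Iic (-(n:ℝ))) = ∅ := by
      ext t
      simp only [Set.mem_iInter, Set.mem_Iic, Set.mem_empty_iff_false, iff_false, not_forall,
        not_le]
      obtain ⟨n, hn⟩ := exists_nat_gt (-t)
      exact ⟨n, by linarith⟩
    have hiInf := Directed.measure_iInter (μ := κ x)
      (fun n => (measurableSet_Iic).nullMeasurableSet) hanti.directed_ge
      ⟨0, measure_ne_top _ _⟩
    rw [hinter, measure_empty] at hiInf
    have hexists : ∃ n : ℕ, κ x (Set.Iic (-(n:ℝ))) < 1/2 := by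
      by_contra hcon
      push_neg at hcon
      have : (1/2 : ENNReal) ≤ ⨅ n : ℕ, κ x (Set.Iic (-(n:ℝ))) := le_iInf hcon
      rw [← hiInf] at this
      norm_num at this
    obtain ⟨n, hn⟩ := hexists
    refine ⟨-(n:ℝ), fun s hs => ?_⟩
    by_contra hlt
    push_neg at hlt
    exact absurd (le_trans hs (measure_mono (Set.Iic_subset_Iic.mpr hlt.le))) (not_le.mpr hn)
  have hf_le_iff : ∀ x a, f x ≤ a ↔ (1/2 : ENNReal) ≤ κ x (Set.Iic a) := by
    intro x a
    constructor
    · intro hfa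
      have hanti : Antitone fun n : ℕ => Set.Iic (a + 1/((n:ℝ)+1)) := by
        intro m n hmn
        refine Set.Iic_subset_Iic.mpr ?_
        have h1 : (1:ℝ)/((n:ℝ)+1) ≤ 1/((m:ℝ)+1) := by
          apply one_div_le_one_div_of_le
          · positivity
          · exact_mod_cast Nat.add_le_add_right hmn 1
        linarith
      have hinter : (⋂ n : ℕ, Set.Iic (a + 1/((n:ℝ)+1))) = Set.Iic a := by
        ext t
        simp only [Set.mem_iInter, Set.mem_Iic]
        constructor
        · intro h
          refine le_of_forall_pos_le_add fun ε hε => ?_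
          obtain ⟨n, hn⟩ := exists_nat_one_div_lt (K := ℝ) hε
          exact le_trans (h n) (by linarith)
        · intro h n
          have : (0:ℝ) < 1/((n:ℝ)+1) := by positivity
          linarith
      have hiInf := Directed.measure_iInter (μ := κ x)
        (fun n => (measurableSet_Iic).nullMeasurableSet) hanti.directed_ge
        ⟨0, measure_ne_top _ _⟩
      rw [hinter] at hiInf
      rw [hiInf]
      refine le_iInf fun n => ?_
      have hlt : f x < a + 1/((n:ℝ)+1) := by
        have : (0:ℝ) < 1/((n:ℝ)+1) := by positivity
        linarith
      obtain ⟨s, hsS, hs⟩ := exists_lt_of_csInf_lt (hSne x) hlt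
      exact le_trans hsS (measure_mono (Set.Iic_subset_Iic.mpr hs.le))
    · intro h
      exact csInf_le (hSbdd x) h
  have hf : Measurable f := by
    refine measurable_of_Iic fun a => ?_
    have : f ⁻¹' Set.Iic a = (fun x => κ x (Set.Iic a)) ⁻¹' Set.Ici (1/2 : ENNReal) := by
      ext x
      simp only [Set.mem_preimage, Set.mem_Iic, Set.mem_Ici]
      exact hf_le_iff x a
    rw [this]
    exact Kernel.measurable_coe κ measurableSet_Iic measurableSet_Ici
  -- a.e. x, κ x {f x} = 1
  have hκf : ∀ᵐ x ∂μ, κ x {f x} = 1 := by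
    filter_upwards [hae_dirac] with x hx0
    obtain ⟨c, hc⟩ := hx0
    have hfx : f x = c := by
      have hSeq : {t : ℝ | (1/2 : ENNReal) ≤ κ x (Set.Iic t)} = Set.Ici c := by
        ext t
        simp only [Set.mem_setOf_eq, Set.mem_Ici]
        constructor
        · intro h
          by_contra hlt
          push_neg at hlt
          have hcompl : κ x ({c}ᶜ) = 0 := by
            rw [measure_compl (measurableSet_singleton c) (measure_ne_top _ _), hc,
              measure_univ, tsub_self]
          have : κ x (Set.Iic t) = 0 :=
            measure_mono_null (fun s hs => fun hsc => by
              rw [Set.mem_singleton_iff] at hsc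
              rw [hsc] at hs
              exact absurd hs (not_le.mpr hlt)) hcompl
          rw [this] at h
          norm_num at h
        · intro h
          calc (1/2 : ENNReal) ≤ 1 := by norm_num
            _ = κ x {c} := hc.symm
            _ ≤ κ x (Set.Iic t) := measure_mono (by simpa using h)
      rw [hf_def]
      simp only
      rw [hSeq, csInf_Ici]
    rw [hfx]
    exact hc
  -- Y = f ∘ X a.s.
  have hset : MeasurableSet {q : (Fin p → ℝ) × ℝ | q.2 = f q.1} :=
    measurableSet_eq_fun measurable_snd (hf.comp measurable_fst)
  have h1 : P.map (fun ω => (X ω, Y ω)) {q : (Fin p → ℝ) × ℝ | q.2 = f q.1} = 1 := by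
    rw [← hmapXY, Measure.compProd_apply hset]
    have hone : ∀ᵐ x ∂μ, (κ x) (Prod.mk x ⁻¹' {q : (Fin p → ℝ) × ℝ | q.2 = f q.1}) = 1 := by
      filter_upwards [hκf] with x hx
      have : Prod.mk x ⁻¹' {q : (Fin p → ℝ) × ℝ | q.2 = f q.1} = {f x} := by
        ext t; simp [Set.mem_singleton_iff]
      rw [this]
      exact hx
    rw [lintegral_congr_ae hone, lintegral_one, measure_univ]
  have hae_eq : ∀ᵐ ω ∂P, Y ω = f (X ω) := by
    rw [Measure.map_apply (hX.prodMk hY) hset] at h1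
    have hEmeas : MeasurableSet ((fun ω => (X ω, Y ω)) ⁻¹' {q : (Fin p → ℝ) × ℝ | q.2 = f q.1}) :=
      (hX.prodMk hY) hset
    have hcompl : P (((fun ω => (X ω, Y ω)) ⁻¹' {q : (Fin p → ℝ) × ℝ | q.2 = f q.1})ᶜ) = 0 := by
      rw [measure_compl hEmeas (measure_ne_top _ _), h1, measure_univ, tsub_self]
    rw [ae_iff]
    have hseteq : {ω | ¬ Y ω = f (X ω)}
        = ((fun ω => (X ω, Y ω)) ⁻¹' {q : (Fin p → ℝ) × ℝ | q.2 = f q.1})ᶜ := by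
      ext ω
      simp
    rw [hseteq]
    exact hcompl
  exact ⟨⟨f, hf, hae_eq⟩, hna⟩
end

section
/- Suppose the cdf of Y is continuous and some coordinate X_k of X has continuous cdf (both laws atomless). Then Y is completely separated relative to X if and only if Y perfectly depends on X, i.e. if and only if there exists a Borel measurable f : ℝ^p → ℝ with Y = f(X) almost surely. -/
open MeasureTheory ProbabilityTheory Set Filter Topology

section Aux


lemma measurableSet_eq_fun_ereal {α : Type*} [MeasurableSpace α] {f g : α → EReal}
    (hf : Measurable f) (hg : Measurable g) : MeasurableSet {x | f x = g x} := by
  have : {x | f x = g x} = {x | f x ≤ g x} ∩ {x | g x ≤ f x} := by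
    ext x; simp [le_antisymm_iff]
  rw [this]
  exact (measurableSet_le hf hg).inter (measurableSet_le hg hf)

lemma measure_null_of_null_inter_Iic (ν : Measure ℝ) [NullSingletonClass ν] {S : Set ℝ}
    (h : ∀ y ∈ S, ν (S ∩ Iic y) = 0) : ν S = 0 := by
  classical
  have hcover : S ⊆ (⋃ q : ℚ, if ∃ y ∈ S, (q : ℝ) ≤ y then S ∩ Iic (q : ℝ) else ∅)
      ∪ {y | y ∈ S ∧ ∀ z ∈ S, z ≤ y} := by
    intro y hy
    by_cases hmax : ∃ z ∈ S, y < z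
    · obtain ⟨z, hz, hyz⟩ := hmax
      obtain ⟨q, hq1, hq2⟩ := exists_rat_btwn hyz
      exact Or.inl (mem_iUnion.2 ⟨q, by rw [if_pos ⟨z, hz, hq2.le⟩]; exact ⟨hy, hq1.le⟩⟩)
    · exact Or.inr ⟨hy, fun z hz => not_lt.1 fun h' => hmax ⟨z, hz, h'⟩⟩
  refine measure_mono_null hcover (measure_union_null ?_ ?_)
  · refine measure_iUnion_null fun q => ?_
    split_ifs with hq
    · obtain ⟨z, hz, hqz⟩ := hq
      refine measure_mono_null (fun w hw => ?_) (h z hz)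
      exact ⟨hw.1, le_trans hw.2 hqz⟩
    · simp
  · exact Set.Subsingleton.measure_zero
      (fun a ha b hb => le_antisymm (hb.2 a ha.1) (ha.2 b hb.1)) ν

noncomputable def cdfR (ν : Measure ℝ) (y : ℝ) : ℝ := (ν (Iio y)).toReal

noncomputable def quantE (ν : Measure ℝ) (c : ℝ) : EReal :=
  sInf (Real.toEReal '' {z : ℝ | c ≤ cdfR ν z})

lemma cdfR_mono (ν : Measure ℝ) [IsFiniteMeasure ν] : Monotone (cdfR ν) := fun a b hab =>
  ENNReal.toReal_mono (measure_ne_top ν _) (measure_mono (Iio_subset_Iio hab))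

lemma cdfR_measurable (ν : Measure ℝ) [IsFiniteMeasure ν] : Measurable (cdfR ν) :=
  (cdfR_mono ν).measurable

lemma quantE_mono (ν : Measure ℝ) : Monotone (quantE ν) := fun a b hab =>
  sInf_le_sInf (image_mono fun z hz => le_trans hab hz)

lemma quantE_measurable (ν : Measure ℝ) : Measurable (quantE ν) :=
  (quantE_mono ν).measurable

lemma ae_quantE_cdfR_eq (ν : Measure ℝ) [IsProbabilityMeasure ν] [NullSingletonClass ν] :
    ∀ᵐ y ∂ν, quantE ν (cdfR ν y) = (y : EReal) := by
  -- the set where cdf vanishes is null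
  have hN : ν {y | ν (Iio y) = 0} = 0 := by
    refine measure_null_of_null_inter_Iic ν fun y hy => ?_
    refine measure_mono_null (fun z hz => ?_) (?_ : ν (Iic y) = 0)
    · exact hz.2
    · refine measure_mono_null (?_ : Iic y ⊆ Iio y ∪ {y}) ?_
      · intro z hz
        exact (mem_Iic.1 hz).lt_or_eq.imp id (fun h => by simp [h])
      · exact measure_union_null hy (measure_singleton y)
  -- flat pieces are null
  have hC : ∀ r : ℚ, ν {y | (r : ℝ) < y ∧ ν (Ico (r : ℝ) y) = 0} = 0 := by
    intro r
    refine measure_null_of_null_inter_Iic ν fun y hy => ?_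
    refine measure_mono_null (fun z hz => ?_) (?_ : ν (Ico (r : ℝ) y ∪ {y}) = 0)
    · rcases (mem_Iic.1 hz.2).lt_or_eq with h' | h'
      · exact Or.inl ⟨hz.1.1.le, h'⟩
      · exact Or.inr (by simp [h'])
    · exact measure_union_null hy.2 (measure_singleton y)
  rw [ae_iff]
  refine measure_mono_null (fun y hy => ?_)
    (measure_union_null hN (measure_iUnion_null fun r : ℚ => hC r))
  simp only [mem_setOf_eq] at hy
  by_cases h0 : ν (Iio y) = 0
  · exact Or.inl h0
  · right
    -- the set S of z with cdf z ≥ cdf y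
    set S : Set ℝ := {z : ℝ | cdfR ν y ≤ cdfR ν z} with hS
    have hyS : y ∈ S := mem_setOf.2 (le_refl _)
    have hub : quantE ν (cdfR ν y) ≤ (y : EReal) := sInf_le ⟨y, hyS, rfl⟩
    -- lower bound
    have hlow : ∃ b : ℝ, ν (Iic b) < ν (Iio y) := by
      have hinter : ⋂ n : ℕ, Iic (-(n : ℝ)) = ∅ := by
        rw [eq_empty_iff_forall_notMem]
        intro z hz
        obtain ⟨n, hn⟩ := exists_nat_gt (-z)
        have := mem_iInter.1 hz n
        simp only [mem_Iic] at this
        linarith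
      have htend : Tendsto (fun n : ℕ => ν (Iic (-(n : ℝ)))) atTop (𝓝 0) := by
        have := tendsto_measure_iInter_atTop (μ := ν) (s := fun n : ℕ => Iic (-(n : ℝ)))
          (fun n => measurableSet_Iic.nullMeasurableSet)
          (fun m n hmn => Iic_subset_Iic.2 (by exact_mod_cast neg_le_neg (by exact_mod_cast hmn)))
          ⟨0, measure_ne_top ν _⟩
        rwa [hinter, measure_empty] at this
      have := htend.eventually_lt_const (pos_iff_ne_zero.2 h0)
      obtain ⟨n, hn⟩ := this.exists
      exact ⟨-(n : ℝ), hn⟩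
    obtain ⟨b, hb⟩ := hlow
    have hSb : ∀ z ∈ S, b < z := by
      intro z hz
      by_contra h'
      push_neg at h'
      have h1 : ν (Iio y) ≤ ν (Iio z) :=
        (ENNReal.toReal_le_toReal (measure_ne_top ν _) (measure_ne_top ν _)).1 hz
      have h2 : ν (Iio z) ≤ ν (Iic b) := measure_mono fun w hw => le_trans (le_of_lt hw) h'
      exact absurd (lt_of_le_of_lt (h1.trans h2) hb) (lt_irrefl _)
    have hlb : (b : EReal) ≤ quantE ν (cdfR ν y) := by
      refine le_sInf fun e he => ?_
      obtain ⟨z, hz, rfl⟩ := he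
      exact EReal.coe_le_coe_iff.2 (hSb z hz).le
    -- quantE is a real number q ≤ y
    set q : ℝ := (quantE ν (cdfR ν y)).toReal with hq
    have hqne_top : quantE ν (cdfR ν y) ≠ ⊤ :=
      ne_of_lt (lt_of_le_of_lt hub (EReal.coe_lt_top y))
    have hqne_bot : quantE ν (cdfR ν y) ≠ ⊥ :=
      ne_of_gt (lt_of_lt_of_le (EReal.bot_lt_coe b) hlb)
    have hqcoe : (q : EReal) = quantE ν (cdfR ν y) := EReal.coe_toReal hqne_top hqne_bot
    have hqy : q ≤ y := EReal.coe_le_coe_iff.1 (hqcoe.le.trans hub)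
    have hqlt : q < y := by
      rcases lt_or_eq_of_le hqy with h' | h'
      · exact h'
      · exact absurd (by rw [← hqcoe, h']) hy
    obtain ⟨r, hr1, hr2⟩ := exists_rat_btwn hqlt
    refine mem_iUnion.2 ⟨r, hr2, ?_⟩
    -- cdf r = cdf y
    have hry : cdfR ν (r : ℝ) ≤ cdfR ν y := cdfR_mono ν hr2.le
    have hyr : cdfR ν y ≤ cdfR ν (r : ℝ) := by
      have : sInf (Real.toEReal '' S) < ((r : ℝ) : EReal) := by
        rw [← quantE, ← hqcoe]
        exact_mod_cast hr1
      obtain ⟨e, he, helt⟩ := sInf_lt_iff.1 this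
      obtain ⟨z, hz, rfl⟩ := he
      have hzr : z ≤ (r : ℝ) := (EReal.coe_le_coe_iff.1 helt.le)
      exact le_trans hz (cdfR_mono ν hzr)
    have hcdf_eq : ν (Iio (r : ℝ)) = ν (Iio y) :=
      (ENNReal.toReal_eq_toReal_iff' (measure_ne_top ν _) (measure_ne_top ν _)).1
        (le_antisymm hry hyr)
    -- conclude the flat piece is null
    have hsets : Iio y = Iio (r : ℝ) ∪ Ico (r : ℝ) y := by
      ext w
      simp only [mem_union, mem_Iio, mem_Ico]
      constructor
      · intro hw
        rcases lt_or_ge w (r : ℝ) with h' | h'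
        · exact Or.inl h'
        · exact Or.inr ⟨h', hw⟩
      · rintro (h' | ⟨_, h'⟩)
        · exact lt_trans h' hr2
        · exact h'
    have hsplit : ν (Iio y) = ν (Iio (r : ℝ)) + ν (Ico (r : ℝ) y) := by
      rw [hsets]
      exact measure_union (Set.disjoint_left.2 fun w hw hw' => absurd hw'.1 (not_le.2 hw))
        measurableSet_Ico
    rw [hcdf_eq] at hsplit
    have : ν (Ico (r : ℝ) y) = 0 := by
      have := hsplit.symm
      nth_rewrite 2 [← add_zero (ν (Iio y))] at this
      exact (ENNReal.add_right_inj (measure_ne_top ν _)).1 this.symm |>.symm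
    exact this

variable {E : Type*} [MeasurableSpace E]

lemma measurable_kernel_Iio (κ : Kernel E ℝ) [IsSFiniteKernel κ] :
    Measurable (fun q : E × ℝ => κ q.1 (Iio q.2)) := by
  have hs : MeasurableSet {r : (E × ℝ) × ℝ | r.2 < r.1.2} :=
    measurableSet_lt measurable_snd (measurable_snd.comp measurable_fst)
  set η : Kernel (E × ℝ) ℝ := κ.comap (Prod.fst : E × ℝ → E) measurable_fst with hη
  have h := Kernel.measurable_kernel_prodMk_left (κ := η) hs
  have heq : (fun q : E × ℝ => κ q.1 (Iio q.2)) = fun q : E × ℝ =>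
      η q (Prod.mk q ⁻¹' {r : (E × ℝ) × ℝ | r.2 < r.1.2}) := by
    funext q
    have hpre : Prod.mk q ⁻¹' {r : (E × ℝ) × ℝ | r.2 < r.1.2} = Iio q.2 := by
      ext v; simp
    rw [hη, Kernel.comap_apply, hpre]
  rw [heq]; exact h

lemma measurable_kernel_singleton (κ : Kernel E ℝ) [IsSFiniteKernel κ] :
    Measurable (fun q : E × ℝ => κ q.1 {q.2}) := by
  have hs : MeasurableSet {r : (E × ℝ) × ℝ | r.2 = r.1.2} :=
    measurableSet_eq_fun (measurable_snd : Measurable fun r : (E × ℝ) × ℝ => r.2)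
      ((measurable_snd.comp measurable_fst)).stronglyMeasurable.measurable
  set η : Kernel (E × ℝ) ℝ := κ.comap (Prod.fst : E × ℝ → E) measurable_fst with hη
  have h := Kernel.measurable_kernel_prodMk_left (κ := η) hs
  have heq : (fun q : E × ℝ => κ q.1 {q.2}) = fun q : E × ℝ =>
      η q (Prod.mk q ⁻¹' {r : (E × ℝ) × ℝ | r.2 = r.1.2}) := by
    funext q
    have hpre : Prod.mk q ⁻¹' {r : (E × ℝ) × ℝ | r.2 = r.1.2} = {q.2} := by
      ext v; simp [eq_comm]
    rw [hη, Kernel.comap_apply, hpre]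
  rw [heq]; exact h

lemma measurable_phi (κ : Kernel E ℝ) [IsSFiniteKernel κ] :
    Measurable (fun q : E × ℝ =>
      (κ q.1 (Iio q.2)).toReal + (1 / 2) * (κ q.1 {q.2}).toReal) :=
  ((measurable_kernel_Iio κ).ennreal_toReal).add
    (((measurable_kernel_singleton κ).ennreal_toReal).const_mul _)

lemma measurable_relEffect (κ : Kernel E ℝ) [IsMarkovKernel κ] :
    Measurable (fun q : E × E => relEffect (κ q.1) (κ q.2)) := by
  set η : Kernel (E × E) ℝ := κ.comap (Prod.snd : E × E → E) measurable_snd with hη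
  have hf : StronglyMeasurable (fun r : (E × E) × ℝ =>
      (κ r.1.1 (Iio r.2)).toReal + (1 / 2) * (κ r.1.1 {r.2}).toReal) := by
    refine Measurable.stronglyMeasurable ?_
    exact (measurable_phi κ).comp ((measurable_fst.comp measurable_fst).prodMk measurable_snd)
  have h := hf.integral_kernel_prod_right' (κ := η)
  have heq : (fun q : E × E => relEffect (κ q.1) (κ q.2)) =
      fun q : E × E => ∫ y, (κ q.1 (Iio y)).toReal + (1 / 2) * (κ q.1 {y}).toReal ∂η q := by
    funext q
    rw [hη, Kernel.comap_apply]
    rfl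
  rw [heq]
  exact h.measurable

lemma relEffect_dirac_dirac {a b : ℝ} (hab : a ≠ b) :
    relEffect (Measure.dirac a) (Measure.dirac b) = 0 ∨
    relEffect (Measure.dirac a) (Measure.dirac b) = 1 := by
  have h : relEffect (Measure.dirac a) (Measure.dirac b) =
      (Measure.dirac a (Iio b)).toReal + (1 / 2) * (Measure.dirac a {b}).toReal :=
    integral_dirac _ b
  have hsing : Measure.dirac a {b} = 0 := by
    rw [Measure.dirac_apply' _ (measurableSet_singleton b)]
    simp [hab]
  rcases hab.lt_or_gt with h' | h'
  · right
    rw [h, hsing, Measure.dirac_apply' _ measurableSet_Iio]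
    simp [indicator, h']
  · left
    rw [h, hsing, Measure.dirac_apply' _ measurableSet_Iio]
    simp [indicator, not_lt.2 h'.le]


lemma toReal_Iio_add_singleton_le (m : Measure ℝ) [IsProbabilityMeasure m] (u : ℝ) :
    (m (Iio u)).toReal + (m {u}).toReal ≤ 1 := by
  rw [← ENNReal.toReal_add (measure_ne_top m _) (measure_ne_top m _),
    ← measure_union (Set.disjoint_singleton_right.2 (by simp)) (measurableSet_singleton u)]
  calc (m (Iio u ∪ {u})).toReal ≤ (m univ).toReal :=
        ENNReal.toReal_mono (measure_ne_top m _) (measure_mono (subset_univ _))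
    _ = 1 := by simp

lemma backward_dir {Ω : Type*} [MeasurableSpace Ω] {p : ℕ}
    (P : Measure Ω) [IsProbabilityMeasure P]
    (X : Ω → (Fin p → ℝ)) (Y : Ω → ℝ)
    (hX : Measurable X) (hY : Measurable Y)
    (hYc : NoAtoms (P.map Y))
    (f : (Fin p → ℝ) → ℝ) (hf : Measurable f) (hae : ∀ᵐ ω ∂P, Y ω = f (X ω)) :
    ∀ᵐ x : (Fin p → ℝ) × (Fin p → ℝ) ∂((P.map X).prod (P.map X)), x.1 ≠ x.2 →
      relEffect (condDistrib Y X P x.1) (condDistrib Y X P x.2) = 0 ∨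
      relEffect (condDistrib Y X P x.1) (condDistrib Y X P x.2) = 1 := by
  set μ : Measure (Fin p → ℝ) := P.map X with hμ
  haveI : IsProbabilityMeasure μ := Measure.isProbabilityMeasure_map hX.aemeasurable
  -- the law of (X, Y) is the compProd with the deterministic kernel
  have hmapY : μ.map f = P.map Y := by
    rw [hμ, Measure.map_map hf hX]
    exact Measure.map_congr (hae.mono fun ω h => h.symm)
  have hcomp : P.map (fun ω => (X ω, Y ω)) = μ ⊗ₘ Kernel.deterministic f hf := by
    have hgm : Measurable fun x : Fin p → ℝ => (x, f x) := measurable_id.prodMk hf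
    have h1 : P.map (fun ω => (X ω, Y ω)) = P.map (fun ω => (X ω, f (X ω))) :=
      Measure.map_congr (hae.mono fun ω h => congrArg (Prod.mk (X ω)) h)
    have h2 : P.map (fun ω => (X ω, f (X ω))) = μ.map (fun x => (x, f x)) := by
      rw [hμ, Measure.map_map hgm hX]
      rfl
    rw [h1, h2]
    ext s hs
    rw [Measure.compProd_apply hs, Measure.map_apply hgm hs]
    rw [← lintegral_indicator_one (hgm hs)]
    refine lintegral_congr fun x => ?_
    rw [Kernel.deterministic_apply,
      Measure.dirac_apply' _ (measurable_prodMk_left hs)]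
    by_cases hx : (x, f x) ∈ s
    · simp [hx]
    · simp [hx]
  have hdet : ∀ᵐ x ∂μ, condDistrib Y X P x = Measure.dirac (f x) := by
    have := condDistrib_ae_eq_of_measure_eq_compProd_of_measurable hX hY
      (κ := Kernel.deterministic f hf) hcomp
    filter_upwards [this] with x hx
    rw [hx, Kernel.deterministic_apply]
  -- a.e. distinct values
  have hD : MeasurableSet {z : (Fin p → ℝ) × (Fin p → ℝ) | f z.1 = f z.2} :=
    measurableSet_eq_fun (hf.comp measurable_fst) (hf.comp measurable_snd)
  have hne : ∀ᵐ z : (Fin p → ℝ) × (Fin p → ℝ) ∂μ.prod μ, f z.1 ≠ f z.2 := by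
    rw [ae_iff]
    have : {z : (Fin p → ℝ) × (Fin p → ℝ) | ¬f z.1 ≠ f z.2} = {z : (Fin p → ℝ) × (Fin p → ℝ) | f z.1 = f z.2} := by
      ext z; simp
    rw [this, Measure.measure_prod_null hD]
    refine Eventually.of_forall fun x => ?_
    have : Prod.mk x ⁻¹' {z : (Fin p → ℝ) × (Fin p → ℝ) | f z.1 = f z.2} ⊆ f ⁻¹' {f x} := by
      intro w hw
      simpa [eq_comm] using hw
    refine measure_mono_null this ?_
    have h' : μ (f ⁻¹' {f x}) = (μ.map f) {f x} :=
      (Measure.map_apply hf (measurableSet_singleton _)).symm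
    rw [h', hmapY]
    exact @measure_singleton _ _ _ hYc _
  -- transfer the dirac property to both coordinates
  have hd1 : ∀ᵐ z : (Fin p → ℝ) × (Fin p → ℝ) ∂μ.prod μ, condDistrib Y X P z.1 = Measure.dirac (f z.1) := by
    obtain ⟨N, hN0, hNm, hNsub⟩ := exists_measurable_superset_of_null (ae_iff.1 hdet)
    rw [ae_iff]
    refine measure_mono_null (fun z hz => ?_) (?_ : (μ.prod μ) (N ×ˢ univ) = 0)
    · exact ⟨hN0 hz, mem_univ _⟩
    · rw [Measure.prod_prod, hNsub]
      simp
  have hd2 : ∀ᵐ z : (Fin p → ℝ) × (Fin p → ℝ) ∂μ.prod μ, condDistrib Y X P z.2 = Measure.dirac (f z.2) := by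
    obtain ⟨N, hN0, hNm, hNsub⟩ := exists_measurable_superset_of_null (ae_iff.1 hdet)
    rw [ae_iff]
    refine measure_mono_null (fun z hz => ?_) (?_ : (μ.prod μ) (univ ×ˢ N) = 0)
    · exact ⟨mem_univ _, hN0 hz⟩
    · rw [Measure.prod_prod, hNsub]
      simp
  filter_upwards [hne, hd1, hd2] with z hzne hz1 hz2 _
  rw [hz1, hz2]
  exact relEffect_dirac_dirac hzne

lemma forward_dir {Ω : Type*} [MeasurableSpace Ω] {p : ℕ}
    (P : Measure Ω) [IsProbabilityMeasure P]
    (X : Ω → (Fin p → ℝ)) (Y : Ω → ℝ)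
    (hX : Measurable X) (hY : Measurable Y)
    (hYc : NoAtoms (P.map Y))
    (k : Fin p) (hk : NoAtoms (P.map fun ω => X ω k))
    (hCS : ∀ᵐ x : (Fin p → ℝ) × (Fin p → ℝ) ∂((P.map X).prod (P.map X)), x.1 ≠ x.2 →
      relEffect (condDistrib Y X P x.1) (condDistrib Y X P x.2) = 0 ∨
      relEffect (condDistrib Y X P x.1) (condDistrib Y X P x.2) = 1) :
    ∃ f : (Fin p → ℝ) → ℝ, Measurable f ∧ ∀ᵐ ω ∂P, Y ω = f (X ω) := by
  set μ : Measure (Fin p → ℝ) := P.map X with hμ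
  haveI : IsProbabilityMeasure μ := Measure.isProbabilityMeasure_map hX.aemeasurable
  haveI : IsProbabilityMeasure (P.map Y) := Measure.isProbabilityMeasure_map hY.aemeasurable
  haveI : IsProbabilityMeasure (P.map fun ω => (X ω, Y ω)) :=
    Measure.isProbabilityMeasure_map (hX.prodMk hY).aemeasurable
  set κ : Kernel (Fin p → ℝ) ℝ := condDistrib Y X P with hκ
  set ν : Measure ℝ := P.map Y with hν
  -- disintegration identity
  have hcomp : μ ⊗ₘ κ = P.map (fun ω => (X ω, Y ω)) := by
    rw [hκ, condDistrib_def, hμ, ← Measure.fst_map_prodMk (X := X) hY]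
    exact Measure.disintegrate _ _
  -- marginal identity
  have hmarg : ∀ u : ℝ, ν (Iio u) = ∫⁻ x, κ x (Iio u) ∂μ := by
    intro u
    have h1 : ν (Iio u) = (P.map fun ω => (X ω, Y ω)) (univ ×ˢ Iio u) := by
      rw [hν, Measure.map_apply hY measurableSet_Iio,
        Measure.map_apply (hX.prodMk hY) (MeasurableSet.univ.prod measurableSet_Iio)]
      congr 1
      ext ω; simp
    rw [h1, ← hcomp, Measure.compProd_apply (MeasurableSet.univ.prod measurableSet_Iio)]
    refine lintegral_congr fun x => ?_
    congr 1
    ext v; simp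
  -- the diagonal is null
  have hdiagm : MeasurableSet {z : (Fin p → ℝ) × (Fin p → ℝ) | z.1 = z.2} :=
    measurableSet_eq_fun measurable_fst measurable_snd
  have hdiag : (μ.prod μ) {z : (Fin p → ℝ) × (Fin p → ℝ) | z.1 = z.2} = 0 := by
    rw [Measure.measure_prod_null hdiagm]
    refine Eventually.of_forall fun x => ?_
    have hmeask : Measurable fun z : Fin p → ℝ => z k := measurable_pi_apply k
    have hsub : Prod.mk x ⁻¹' {z : (Fin p → ℝ) × (Fin p → ℝ) | z.1 = z.2} ⊆
        (fun z : Fin p → ℝ => z k) ⁻¹' {x k} := by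
      intro w hw
      have hxw : x = w := hw
      simp [← hxw]
    refine measure_mono_null hsub ?_
    have heq : μ ((fun z : Fin p → ℝ => z k) ⁻¹' {x k})
        = (P.map fun ω => X ω k) {x k} := by
      rw [hμ, Measure.map_apply hX (hmeask (measurableSet_singleton _)),
        Measure.map_apply (show Measurable fun ω => X ω k from hmeask.comp hX)
          (measurableSet_singleton _)]
      rfl
    rw [heq]
    exact @measure_singleton _ _ _ hk _
  -- measurability of the relative effect
  have mh : Measurable fun q : (Fin p → ℝ) × (Fin p → ℝ) => relEffect (κ q.1) (κ q.2) :=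
    measurable_relEffect κ
  have hQm : MeasurableSet {z : (Fin p → ℝ) × (Fin p → ℝ) |
      relEffect (κ z.1) (κ z.2) = 0 ∨ relEffect (κ z.1) (κ z.2) = 1} := by
    rw [setOf_or]
    exact (mh (measurableSet_singleton 0)).union (mh (measurableSet_singleton 1))
  -- drop the off-diagonal restriction
  have hne : ∀ᵐ z : (Fin p → ℝ) × (Fin p → ℝ) ∂μ.prod μ, z.1 ≠ z.2 := by
    rw [ae_iff]
    simpa only [ne_eq, not_not] using hdiag
  have h01 : ∀ᵐ z : (Fin p → ℝ) × (Fin p → ℝ) ∂μ.prod μ,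
      relEffect (κ z.1) (κ z.2) = 0 ∨ relEffect (κ z.1) (κ z.2) = 1 := by
    filter_upwards [hCS, hne] with z h1 h2
    exact h1 h2
  -- swap the roles of the two coordinates
  have hsepswap : ∀ᵐ z : (Fin p → ℝ) × (Fin p → ℝ) ∂μ.prod μ,
      relEffect (κ z.2) (κ z.1) = 0 ∨ relEffect (κ z.2) (κ z.1) = 1 := by
    rw [ae_iff]
    have hpre : {z : (Fin p → ℝ) × (Fin p → ℝ) |
        ¬(relEffect (κ z.2) (κ z.1) = 0 ∨ relEffect (κ z.2) (κ z.1) = 1)} =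
        Prod.swap ⁻¹' {z : (Fin p → ℝ) × (Fin p → ℝ) |
        ¬(relEffect (κ z.1) (κ z.2) = 0 ∨ relEffect (κ z.1) (κ z.2) = 1)} := rfl
    have hmap := Measure.map_apply (μ := μ.prod μ) measurable_swap hQm.compl
    rw [Measure.prod_swap] at hmap
    have hcompl : {z : (Fin p → ℝ) × (Fin p → ℝ) |
        ¬(relEffect (κ z.1) (κ z.2) = 0 ∨ relEffect (κ z.1) (κ z.2) = 1)} =
        {z : (Fin p → ℝ) × (Fin p → ℝ) |
        relEffect (κ z.1) (κ z.2) = 0 ∨ relEffect (κ z.1) (κ z.2) = 1}ᶜ := rfl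
    rw [hpre, hcompl, ← hmap, ← hcompl]
    exact ae_iff.1 h01
  have hsep := Measure.ae_ae_of_ae_prod hsepswap
  -- the conditional cdf integral
  set g : (Fin p → ℝ) → ℝ := fun x => ∫ x', relEffect (κ x') (κ x) ∂μ with hg
  have mg : Measurable g := by
    have hsm : StronglyMeasurable fun z : (Fin p → ℝ) × (Fin p → ℝ) =>
        relEffect (κ z.2) (κ z.1) := (mh.comp measurable_swap).stronglyMeasurable
    exact hsm.integral_prod_right'.measurable
  -- main a.e. identity
  have key : ∀ᵐ x ∂μ, ∀ᵐ u ∂κ x, cdfR ν u = g x := by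
    filter_upwards [hsep] with x hx
    -- for a.e. x', the kernel cdf at x' is a.e. constant equal to the relative effect
    have hx2 : ∀ᵐ x' ∂μ, ∀ᵐ u ∂κ x, (κ x' (Iio u)).toReal = relEffect (κ x') (κ x) := by
      filter_upwards [hx] with x' hx'
      have hφm : Measurable fun u : ℝ =>
          (κ x' (Iio u)).toReal + (1 / 2) * (κ x' {u}).toReal :=
        (measurable_phi κ).comp (measurable_const.prodMk measurable_id)
      have hbound : ∀ u : ℝ, (κ x' (Iio u)).toReal + (κ x' {u}).toReal ≤ 1 :=
        toReal_Iio_add_singleton_le (κ x')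
      have hint : Integrable (fun u : ℝ =>
          (κ x' (Iio u)).toReal + (1 / 2) * (κ x' {u}).toReal) (κ x) := by
        refine Integrable.mono' (integrable_const 1) hφm.aestronglyMeasurable
          (Eventually.of_forall fun u => ?_)
        rw [Real.norm_eq_abs, abs_of_nonneg (by positivity)]
        have h2 : (0:ℝ) ≤ (κ x' {u}).toReal := ENNReal.toReal_nonneg
        have := hbound u
        linarith
      rcases hx' with h0 | h1
      · have hz := (integral_eq_zero_iff_of_nonneg
          (fun u => by positivity) hint).1 h0
        filter_upwards [hz] with u hu
        simp only [Pi.zero_apply] at hu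
        rw [h0]
        have ha : (0:ℝ) ≤ (κ x' (Iio u)).toReal := ENNReal.toReal_nonneg
        have hb : (0:ℝ) ≤ (κ x' {u}).toReal := ENNReal.toReal_nonneg
        linarith
      · have hre : ∫ u, ((κ x' (Iio u)).toReal + (1 / 2) * (κ x' {u}).toReal) ∂κ x
            = 1 := h1
        have hsub : ∫ u, (1 - ((κ x' (Iio u)).toReal
            + (1 / 2) * (κ x' {u}).toReal)) ∂κ x = 0 := by
          rw [integral_sub (integrable_const 1) hint, integral_const, hre]
          simp
        have hz := (integral_eq_zero_iff_of_nonneg (fun u => by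
            have := hbound u
            have h2 : (0:ℝ) ≤ (κ x' {u}).toReal := ENNReal.toReal_nonneg
            simp only [Pi.sub_apply, Pi.zero_apply]
            linarith) ((integrable_const 1).sub hint)).1 hsub
        filter_upwards [hz] with u hu
        simp only [Pi.sub_apply, Pi.zero_apply] at hu
        rw [h1]
        have := hbound u
        have h2 : (0:ℝ) ≤ (κ x' {u}).toReal := ENNReal.toReal_nonneg
        linarith
    -- swap the order of the a.e. quantifiers
    have hTm : MeasurableSet {w : (Fin p → ℝ) × ℝ |
        (κ w.1 (Iio w.2)).toReal = relEffect (κ w.1) (κ x)} := by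
      have h1 : Measurable fun w : (Fin p → ℝ) × ℝ => (κ w.1 (Iio w.2)).toReal :=
        (measurable_kernel_Iio κ).ennreal_toReal
      have h2 : Measurable fun w : (Fin p → ℝ) × ℝ => relEffect (κ w.1) (κ x) :=
        mh.comp (measurable_fst.prodMk measurable_const)
      exact measurableSet_eq_fun h1 h2
    have hT0 : (μ.prod (κ x)) {w : (Fin p → ℝ) × ℝ |
        (κ w.1 (Iio w.2)).toReal = relEffect (κ w.1) (κ x)}ᶜ = 0 := by
      rw [Measure.measure_prod_null hTm.compl]
      refine hx2.mono fun x' hx' => ?_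
      exact ae_iff.1 hx'
    have hT0' : ((κ x).prod μ) (Prod.swap ⁻¹' {w : (Fin p → ℝ) × ℝ |
        (κ w.1 (Iio w.2)).toReal = relEffect (κ w.1) (κ x)}ᶜ) = 0 := by
      have hmap := Measure.map_apply (μ := (κ x).prod μ) measurable_swap hTm.compl
      rw [Measure.prod_swap] at hmap
      rw [← hmap]
      exact hT0
    have hswap := (Measure.measure_prod_null (measurable_swap hTm.compl)).1 hT0'
    filter_upwards [hswap] with u hu
    have hae' : ∀ᵐ x' ∂μ, (κ x' (Iio u)).toReal = relEffect (κ x') (κ x) := by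
      rw [ae_iff]
      exact hu
    have h1 : cdfR ν u = ∫ x', (κ x' (Iio u)).toReal ∂μ := by
      rw [cdfR, hmarg u,
        ← integral_toReal ((Kernel.measurable_coe κ measurableSet_Iio).aemeasurable)
          (Eventually.of_forall fun x' => measure_lt_top _ _)]
    rw [h1, hg]
    exact integral_congr_ae hae'
  -- transfer to the original probability space
  have hsetm : MeasurableSet {z : (Fin p → ℝ) × ℝ | cdfR ν z.2 = g z.1} :=
    measurableSet_eq_fun ((cdfR_measurable ν).comp measurable_snd) (mg.comp measurable_fst)
  have hPae : ∀ᵐ ω ∂P, cdfR ν (Y ω) = g (X ω) := by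
    have h1 : ∀ᵐ z : (Fin p → ℝ) × ℝ ∂(μ ⊗ₘ κ), cdfR ν z.2 = g z.1 :=
      (Measure.ae_compProd_iff hsetm).2 key
    rw [hcomp] at h1
    exact (ae_map_iff (hX.prodMk hY).aemeasurable hsetm).1 h1
  have hquant0 : ∀ᵐ y ∂ν, quantE ν (cdfR ν y) = (y : EReal) := @ae_quantE_cdfR_eq ν _ hYc
  have hqsetm : MeasurableSet {y : ℝ | quantE ν (cdfR ν y) = (y : EReal)} :=
    measurableSet_eq_fun_ereal ((quantE_measurable ν).comp (cdfR_measurable ν))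
      measurable_coe_real_ereal
  have hquant : ∀ᵐ ω ∂P, quantE ν (cdfR ν (Y ω)) = ((Y ω : ℝ) : EReal) :=
    (ae_map_iff hY.aemeasurable hqsetm).1 hquant0
  refine ⟨fun x => (quantE ν (g x)).toReal,
    measurable_ereal_toReal.comp ((quantE_measurable ν).comp mg), ?_⟩
  filter_upwards [hPae, hquant] with ω h1 h2
  rw [← h1, h2]
  simp

end Aux

/-- If `Y` and some coordinate of `X` have continuous cdfs (atomless laws), then `Y` is
completely separated relative to `X` iff `Y` perfectly depends on `X`. -/
theorem completelySeparated_iff_perfectDependence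
    {Ω : Type*} [MeasurableSpace Ω] {p : ℕ} (hp : 1 ≤ p)
    (P : Measure Ω) [IsProbabilityMeasure P]
    (X : Ω → (Fin p → ℝ)) (Y : Ω → ℝ)
    (hX : Measurable X) (hY : Measurable Y)
    (hYnd : Nondegenerate P Y)
    (hYc : NoAtoms (P.map Y))
    (k : Fin p) (hk : NoAtoms (P.map fun ω => X ω k)) :
    CompletelySeparated P Y X
      ↔ ∃ f : (Fin p → ℝ) → ℝ, Measurable f ∧ ∀ᵐ ω ∂P, Y ω = f (X ω) := by
  constructor
  · intro hCS
    exact forward_dir P X Y hX hY hYc k hk hCS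
  · rintro ⟨f, hf, hae⟩
    exact backward_dir P X Y hX hY hYc f hf hae
end
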